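/- Let G be a finite simple graph on n ≥ 2 vertices, and let X = (X_1,…,X_k) be a partition of V such that for every vertex i with deg(i) ≥ 18k²·ln n and every part j, E(i, X_j) ≥ deg(i)/k − 5√(deg(i)·ln n). Then there is no set S ⊆ V such that every vertex i ∈ S satisfies E(i,S) > (k + √k)·u_i(X) + 25·k^(5/2)·ln n. -/
import Mathlib


open Finset

/-- Number of neighbors of `i` inside the set `S`. -/
def nbrCount {V : Type*} [Fintype V] [DecidableEq V] (G : SimpleGraph V)
    [DecidableRel G.Adj] (i : V) (S : Finset V) : ℕ :=
  (G.neighborFinset i ∩ S).card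

lemma key_amgm (s a b : ℝ) (hs : 1 ≤ s) (ha : 0 ≤ a) (hb : 0 ≤ b) :
    5 * (s^3 + s^2) * (a * b) ≤ a^2 + 25 * s^6 * b^2 := by
  nlinarith [sq_nonneg (a - 5*s^3*b), mul_nonneg (mul_nonneg (sq_nonneg s) (sub_nonneg.2 hs))
    (mul_nonneg ha hb), sq_nonneg s, sq_nonneg (s*(a-5*s^3*b))]

theorem stmt_1 {V : Type*} [Fintype V] [DecidableEq V] (G : SimpleGraph V)
    [DecidableRel G.Adj] (n k : ℕ) (hn : n = Fintype.card V) (hn2 : 2 ≤ n)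
    (hk : 1 ≤ k)
    (X : Fin k → Finset V)
    (hpart : ∀ v : V, ∃! j : Fin k, v ∈ X j)
    (hlow : ∀ i : V, ∀ j : Fin k,
      (18 : ℝ) * k ^ 2 * Real.log n ≤ G.degree i →
      (nbrCount G i (X j) : ℝ) ≥ G.degree i / k - 5 * Real.sqrt (G.degree i * Real.log n)) :
    ¬ ∃ S : Finset V, S.Nonempty ∧
      ∀ i ∈ S, ∀ ji : Fin k, i ∈ X ji →
        (nbrCount G i S : ℝ) >
          ((k : ℝ) + Real.sqrt k) * nbrCount G i (X ji) +
            25 * (k : ℝ) ^ ((5 : ℝ) / 2) * Real.log n := by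
  rintro ⟨S, ⟨i, hi⟩, hS⟩
  obtain ⟨j, hj, -⟩ := hpart i
  have hmain := hS i hi j hj
  set d : ℝ := (G.degree i : ℝ) with hd
  set L : ℝ := Real.log n with hLdef
  have hd0 : 0 ≤ d := Nat.cast_nonneg _
  have hL : 0 < L := Real.log_pos (by exact_mod_cast hn2)
  have hk1 : (1 : ℝ) ≤ (k : ℝ) := by exact_mod_cast hk
  set s : ℝ := Real.sqrt k with hsdef
  have hs1 : 1 ≤ s := by
    rw [hsdef, show (1:ℝ) = Real.sqrt 1 by simp]
    exact Real.sqrt_le_sqrt hk1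
  have hs0 : 0 < s := lt_of_lt_of_le one_pos hs1
  have hsk : s ^ 2 = (k : ℝ) := Real.sq_sqrt (by linarith)
  have hK : (k : ℝ) ^ ((5 : ℝ) / 2) = s ^ 5 := by
    have h1 : (k : ℝ) ^ ((5 : ℝ) / 2) = ((k : ℝ) ^ ((1:ℝ)/2)) ^ (5 : ℕ) := by
      rw [← Real.rpow_natCast ((k:ℝ) ^ ((1:ℝ)/2)) 5, ← Real.rpow_mul (by positivity)]
      norm_num
    rw [h1, ← Real.rpow_natCast, hsdef, Real.sqrt_eq_rpow, Real.rpow_natCast]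
  -- nbrCount i S ≤ degree
  have hdegle : (nbrCount G i S : ℝ) ≤ d := by
    rw [hd]
    exact_mod_cast Finset.card_le_card (Finset.inter_subset_left)
  have hnbrX0 : (0 : ℝ) ≤ (nbrCount G i (X j) : ℝ) := Nat.cast_nonneg _
  rw [hK] at hmain
  by_cases hcase : (18 : ℝ) * k ^ 2 * L ≤ d
  · -- large degree case
    have hlb := hlow i j hcase
    set t : ℝ := Real.sqrt (d * L) with htdef
    have ht : t = Real.sqrt d * Real.sqrt L := Real.sqrt_mul hd0 L
    have ha2 : (Real.sqrt d) ^ 2 = d := Real.sq_sqrt hd0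
    have hb2 : (Real.sqrt L) ^ 2 = L := Real.sq_sqrt hL.le
    have hkey : 5 * (s^3 + s^2) * t ≤ d + 25 * s^6 * L := by
      have h := key_amgm s (Real.sqrt d) (Real.sqrt L) hs1 (Real.sqrt_nonneg d)
        (Real.sqrt_nonneg L)
      rw [ha2, hb2, ← ht] at h
      exact h
    rw [← hd] at hlb
    -- hlb : nbrX ≥ d / k - 5 t
    have hdiv : d / (k : ℝ) * (k : ℝ) = d := div_mul_cancel₀ d (by positivity)
    have hub : ((k:ℝ) + s) * (d / (k:ℝ) - 5 * t) + 25 * s^5 * L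
        ≤ ((k : ℝ) + s) * (nbrCount G i (X j) : ℝ) + 25 * s^5 * L := by
      have h1 : (0:ℝ) ≤ s^2 + s := by positivity
      have h2 := mul_le_mul_of_nonneg_left hlb h1
      rw [hsk] at h2
      linarith
    have hlt : ((k:ℝ) + s) * (d / (k:ℝ) - 5 * t) + 25 * s^5 * L < d :=
      hub.trans_lt (hmain.trans_le hdegle)
    rw [← hsk] at hlt
    have hsne : s ≠ 0 := hs0.ne'
    have h2 : s^2 * (d / s^2) = d := by field_simp
    have h3 : s^3 * (d / s^2) = s * d := by
      have h4 : s^3 * (d / s^2) = s * (s^2 * (d / s^2)) := by ring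
      rw [h4, h2]
    have ht0 : 0 ≤ t := Real.sqrt_nonneg _
    have hmul := mul_lt_mul_of_pos_left hlt hs0
    nlinarith [hmul, hkey, h2, h3, ht0, hs0]
  · -- small degree case
    push_neg at hcase
    have hs5 : s^4 ≤ s^5 := by nlinarith [mul_le_mul_of_nonneg_left hs1 (pow_nonneg hs0.le 4)]
    have hs4 : s^4 = (k:ℝ)^2 := by rw [← hsk]; ring
    have hpos : (0:ℝ) ≤ ((k : ℝ) + s) * (nbrCount G i (X j) : ℝ) := by positivity
    nlinarith [hmain, hdegle, mul_le_mul_of_nonneg_right hs5 hL.le]
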